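/- The average over the m possible single-block prox-gradient updates decreases the Lyapunov value: (1/m) Σ_{j=1}^m [ f(x^{k+1,(j)}) + r(x^{k+1,(j)}) + κ_{k+1}^{(j)} ] ≤ f(x^k) + r(x^k) + κ_k − (1/(2m)) Σ_{j=1}^m (1/γ_j^k − L_j(x^k_{−j}) − 2Mτ/√m) ‖w_j^k − x_j^k‖². -/

import Mathlib

open Finset RealInnerProductSpace

/-- squared ℓ²-norm on the product `H = H₁ × ⋯ × H_m`: `‖x‖² = Σ_j ‖x_j‖²`. -/
noncomputable def sqNorm {m : ℕ} {H : Fin m → Type*} [∀ j, NormedAddCommGroup (H j)]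
    (x : ∀ j, H j) : ℝ := ∑ j, ‖x j‖ ^ 2

/-- the partial gradient map: `y ↦ ∇_j f(x_1, …, x_{j-1}, y, x_{j+1}, …, x_m)`. -/
noncomputable def pgrad {m : ℕ} {H : Fin m → Type*} [∀ j, NormedAddCommGroup (H j)]
    [∀ j, InnerProductSpace ℝ (H j)] [∀ j, FiniteDimensional ℝ (H j)]
    (f : (∀ j, H j) → ℝ) (x : ∀ j, H j) (j : Fin m) (y : H j) : H j :=
  gradient (fun z => f (Function.update x j z)) y


lemma descent_lemma {E : Type*} [NormedAddCommGroup E] [InnerProductSpace ℝ E] [CompleteSpace E]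
    (g : E → ℝ) (G : E → E) (L : ℝ)
    (hg : ∀ z, HasGradientAt g (G z) z)
    (hL : ∀ z z', ‖G z - G z'‖ ≤ L * ‖z - z'‖) (p v : E) :
    g (p + v) ≤ g p + ⟪G p, v⟫ + L / 2 * ‖v‖ ^ 2 := by
  set ψ : ℝ → ℝ := fun t => g (p + t • v) - t * ⟪G p, v⟫ - L / 2 * t ^ 2 * ‖v‖ ^ 2 with hψ
  have hline : ∀ t : ℝ, HasDerivAt (fun t : ℝ => p + t • v) v t := by
    intro t
    simpa using ((hasDerivAt_id t).smul_const v).const_add p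
  have hd : ∀ t : ℝ, HasDerivAt ψ
      (⟪G (p + t • v), v⟫ - ⟪G p, v⟫ - L * t * ‖v‖ ^ 2) t := by
    intro t
    have h1 : HasDerivAt (fun t : ℝ => g (p + t • v)) ⟪G (p + t • v), v⟫ t := by
      have := (hg (p + t • v)).hasFDerivAt.comp_hasDerivAt t (hline t)
      convert this using 1
      · rfl
      · rfl
      · rfl
      · exact (InnerProductSpace.toDual_apply_apply).symm
    have h2 : HasDerivAt (fun t : ℝ => t * ⟪G p, v⟫) ⟪G p, v⟫ t := by
      simpa using (hasDerivAt_id t).mul_const ⟪G p, v⟫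
    have h3 : HasDerivAt (fun t : ℝ => L / 2 * t ^ 2 * ‖v‖ ^ 2) (L * t * ‖v‖ ^ 2) t := by
      have h4 : HasDerivAt (fun t : ℝ => t ^ 2) (2 * t) t := by
        simpa using hasDerivAt_pow 2 t
      have := (h4.const_mul (L / 2)).mul_const (‖v‖ ^ 2)
      convert this using 1
      · rfl
      · rfl
      · ring
    convert (h1.sub h2).sub h3 using 1
    · rfl
    · rfl
    · rfl
  have hanti : AntitoneOn ψ (Set.Icc 0 1) := by
    apply antitoneOn_of_deriv_nonpos (convex_Icc 0 1)
    · exact fun t _ => (hd t).continuousAt.continuousWithinAt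
    · exact fun t _ => ((hd t).differentiableAt).differentiableWithinAt
    · intro t ht
      rw [interior_Icc] at ht
      rw [(hd t).deriv]
      have h1 : ⟪G (p + t • v), v⟫ - ⟪G p, v⟫ ≤ L * t * ‖v‖ ^ 2 := by
        rw [← inner_sub_left]
        calc ⟪G (p + t • v) - G p, v⟫ ≤ ‖G (p + t • v) - G p‖ * ‖v‖ := real_inner_le_norm _ _
          _ ≤ (L * ‖(p + t • v) - p‖) * ‖v‖ :=
            mul_le_mul_of_nonneg_right (hL _ _) (norm_nonneg _)
          _ = L * t * ‖v‖ ^ 2 := by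
            rw [add_sub_cancel_left, norm_smul]
            simp only [Real.norm_eq_abs, abs_of_pos ht.1]
            ring
      linarith
  have h5 := hanti (Set.left_mem_Icc.2 zero_le_one) (Set.right_mem_Icc.2 zero_le_one) zero_le_one
  simp only [hψ] at h5
  simp only [one_smul, zero_smul, add_zero, one_pow, one_mul, zero_pow, mul_zero, zero_mul,
    sub_zero] at h5
  linarith

lemma ereal_coe_sum {ι : Type*} (s : Finset ι) (f : ι → ℝ) :
    ((∑ i ∈ s, f i : ℝ) : EReal) = ∑ i ∈ s, ((f i : ℝ) : EReal) := by
  induction s using Finset.cons_induction with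
  | empty => simp
  | cons a s ha ih => rw [Finset.sum_cons, Finset.sum_cons, EReal.coe_add, ih]

lemma ereal_sum_ne_bot {ι : Type*} (s : Finset ι) (f : ι → EReal)
    (h : ∀ i ∈ s, f i ≠ ⊥) : ∑ i ∈ s, f i ≠ ⊥ := by
  induction s using Finset.cons_induction with
  | empty => simp
  | cons a s ha ih =>
    rw [Finset.sum_cons, Ne, EReal.add_eq_bot_iff]
    push_neg
    exact ⟨h a (Finset.mem_cons_self a s), ih fun i hi => h i (Finset.mem_cons.2 (Or.inr hi))⟩

lemma telescope_sum {V : Type*} [AddCommGroup V] (u : ℤ → V) (k : ℤ) (n : ℕ) :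
    u k - u (k - n) = ∑ i ∈ Finset.range n, (u (k - i) - u (k - i - 1)) := by
  induction n with
  | zero => simp
  | succ n ih =>
    rw [Finset.sum_range_succ, ← ih]
    have : (k : ℤ) - (n + 1 : ℕ) = k - n - 1 := by push_cast; ring
    rw [this]
    abel

lemma kappa_sum_identity (T : ℕ → ℝ) (t : ℕ) :
    (∑ i ∈ Finset.range t, ((i : ℝ) + 1) * T (i + 1)) =
      (∑ i ∈ Finset.range (t + 1), ((i : ℝ) + 1) * T i) -
        ∑ i ∈ Finset.range (t + 1), T i := by
  rw [← Finset.sum_sub_distrib]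
  have : ∀ i ∈ Finset.range (t + 1), ((i : ℝ) + 1) * T i - T i = (i : ℝ) * T i :=
    fun i _ => by ring
  rw [Finset.sum_congr rfl this, Finset.sum_range_succ']
  push_cast
  simp

lemma sqNorm_nonneg {m : ℕ} {H : Fin m → Type*} [∀ j, NormedAddCommGroup (H j)]
    (x : ∀ j, H j) : 0 ≤ sqNorm x :=
  Finset.sum_nonneg fun _ _ => sq_nonneg _

set_option maxHeartbeats 2000000 in
theorem stmt_8 {m : ℕ} (hm : 1 ≤ m)
    (H : Fin m → Type*) [∀ j, NormedAddCommGroup (H j)]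
    [∀ j, InnerProductSpace ℝ (H j)] [∀ j, FiniteDimensional ℝ (H j)]
    (f : (∀ j, H j) → ℝ) (hf : ContDiff ℝ 1 f)
    (r : ∀ j, H j → EReal)
    (hr_ne_top : ∀ j, ∃ y, r j y ≠ ⊤) (hr_ne_bot : ∀ j y, r j y ≠ ⊥)
    (hr_lsc : ∀ j, LowerSemicontinuous (r j))
    (τ : ℕ) (hτ : 1 ≤ τ) (M : ℝ) (hM : 0 < M) (k : ℕ)
    -- the trajectory x^0, …, x^k, extended by x^h = x^0 for h ≤ 0
    (x : ℤ → ∀ j, H j) (hx0 : ∀ h : ℤ, h ≤ 0 → x h = x 0)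
    -- delay vector and delayed iterate x^{k-d_k}
    (d : Fin m → ℕ) (hd : ∀ j, d j ≤ τ)
    (xd : ∀ j, H j) (hxd : ∀ j, xd j = x ((k : ℤ) - d j) j)
    -- ‖∇f(x^k) − ∇f(x^{k−d_k})‖ ≤ M ‖x^k − x^{k−d_k}‖
    (hMd : Real.sqrt (sqNorm (fun j => pgrad f (x k) j (x k j) - pgrad f xd j (xd j))) ≤
      M * Real.sqrt (sqNorm (x k - xd)))
    -- partial-gradient Lipschitz moduli L_j(x^k_{−j})
    (Lip : Fin m → ℝ)
    (hLip : ∀ (j : Fin m) (y y' : H j),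
      ‖pgrad f (x k) j y - pgrad f (x k) j y'‖ ≤ Lip j * ‖y - y'‖)
    -- stepsizes and the prox-gradient updates w_j^k
    (γ : Fin m → ℝ) (hγ : ∀ j, 0 < γ j)
    (w : ∀ j, H j)
    (hprox : ∀ (j : Fin m) (y : H j),
      r j (w j) +
          ((⟪pgrad f xd j (xd j), w j - x k j⟫ + (1 / (2 * γ j)) * ‖w j - x k j‖ ^ 2 : ℝ) : EReal) ≤
        r j y +
          ((⟪pgrad f xd j (xd j), y - x k j⟫ + (1 / (2 * γ j)) * ‖y - x k j‖ ^ 2 : ℝ) : EReal))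
    -- x^{k+1,(j)} = x^k with block j replaced by w_j^k
    (X : Fin m → ∀ j', H j') (hX : ∀ j, X j = Function.update (x k) j (w j))
    -- the trajectory continued by x^{k+1} := x^{k+1,(j)}
    (y : Fin m → ℤ → ∀ j', H j')
    (hy : ∀ (j : Fin m) (h : ℤ), y j h = if h = (k : ℤ) + 1 then X j else x h)
    -- κ_k and κ_{k+1}^{(j)}
    (κk : ℝ)
    (hκk : κk = (M / (2 * Real.sqrt m)) * ∑ i ∈ Finset.range τ,
      ((i : ℝ) + 1) * sqNorm (x ((k : ℤ) - τ + 1 + i) - x ((k : ℤ) - τ + i)))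
    (κ' : Fin m → ℝ)
    (hκ' : ∀ j, κ' j = (M / (2 * Real.sqrt m)) * ∑ i ∈ Finset.range τ,
      ((i : ℝ) + 1) *
        sqNorm (y j ((k : ℤ) + 1 - τ + 1 + i) - y j ((k : ℤ) + 1 - τ + i))) :
    ((1 / (m : ℝ) : ℝ) : EReal) *
        ∑ j, ((f (X j) : EReal) + ∑ j', r j' (X j j') + (κ' j : EReal)) ≤
      (f (x k) : EReal) + ∑ j', r j' (x k j') + (κk : EReal) -
        (((1 / (2 * (m : ℝ))) * ∑ j, (1 / γ j - Lip j - 2 * M * (τ : ℝ) / Real.sqrt m) *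
            ‖w j - x k j‖ ^ 2 : ℝ) : EReal) := by
  classical
  have hm1 : (1:ℝ) ≤ m := by exact_mod_cast hm
  have hmpos : (0:ℝ) < m := by linarith
  have hsm : (0:ℝ) < Real.sqrt m := Real.sqrt_pos.2 hmpos
  have hsm2 : Real.sqrt m * Real.sqrt m = (m:ℝ) := Real.mul_self_sqrt hmpos.le
  obtain ⟨t, rfl⟩ : ∃ t, τ = t + 1 := ⟨τ - 1, by omega⟩
  set σ : ℝ := M / (2 * Real.sqrt (m:ℝ)) with hσdef
  have hσnn : 0 ≤ σ := by positivity
  set D : ℝ := 1 / (2 * (m:ℝ)) * ∑ j, (1 / γ j - Lip j - 2 * M * ((t+1 : ℕ) : ℝ) / Real.sqrt (m:ℝ)) *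
      ‖w j - x k j‖ ^ 2 with hDdef
  set T : ℕ → ℝ := fun i =>
    sqNorm (x ((k:ℤ) - ((t+1 : ℕ) : ℤ) + 1 + (i : ℤ)) - x ((k:ℤ) - ((t+1 : ℕ) : ℤ) + (i : ℤ)))
    with hTdef
  set S : ℝ := ∑ i ∈ Finset.range (t+1), T i with hSdef
  have hTnn : ∀ i, 0 ≤ T i := by intro i; rw [hTdef]; exact sqNorm_nonneg _
  have hSnn : 0 ≤ S := by rw [hSdef]; exact Finset.sum_nonneg fun i _ => hTnn i
  have hκkT : κk = σ * ∑ i ∈ Finset.range (t+1), ((i:ℝ)+1) * T i := by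
    rw [hκk]
  -- gradient facts and descent lemma
  have hdiff : Differentiable ℝ f := hf.differentiable one_ne_zero
  have hgrad : ∀ (j : Fin m) (z : H j),
      HasGradientAt (fun yy => f (Function.update (x k) j yy)) (pgrad f (x k) j z) z := by
    intro j z
    have hu : DifferentiableAt ℝ (Function.update (x k) j) z :=
      (hasFDerivAt_update (x k) z).differentiableAt
    have : DifferentiableAt ℝ (fun yy => f (Function.update (x k) j yy)) z :=
      (hdiff (Function.update (x k) j z)).comp z hu
    simpa [pgrad] using this.hasGradientAt
  have h1 : ∀ j, f (X j) ≤ f (x k) +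
      ⟪pgrad f (x k) j (x k j), w j - x k j⟫ + Lip j / 2 * ‖w j - x k j‖ ^ 2 := by
    intro j
    have hD2 := descent_lemma (fun yy => f (Function.update (x k) j yy)) (pgrad f (x k) j)
      (Lip j) (hgrad j) (hLip j) (x k j) (w j - x k j)
    have he : x k j + (w j - x k j) = w j := by abel
    rw [he, Function.update_eq_self] at hD2
    rwa [← hX j] at hD2
  by_cases htop : ∀ j, r j (x k j) ≠ ⊤
  · -- main case : all r j (x k j) finite
    have hprox0 : ∀ j, r j (w j) +
        ((⟪pgrad f xd j (xd j), w j - x k j⟫ + 1 / (2 * γ j) * ‖w j - x k j‖ ^ 2 : ℝ) : EReal)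
        ≤ r j (x k j) := by
      intro j
      have h0 := hprox j (x k j)
      rw [sub_self, inner_zero_right, norm_zero, zero_pow two_ne_zero, mul_zero, add_zero,
        EReal.coe_zero, add_zero] at h0
      exact h0
    have hwne : ∀ j, r j (w j) ≠ ⊤ := by
      intro j hw
      have h0 := hprox0 j
      rw [hw, EReal.top_add_coe] at h0
      exact htop j (top_le_iff.1 h0)
    set ρ : Fin m → ℝ := fun j => (r j (x k j)).toReal with hρdef
    set ρw : Fin m → ℝ := fun j => (r j (w j)).toReal with hρwdef
    have hcoeρ : ∀ j, ((ρ j : ℝ) : EReal) = r j (x k j) := fun j =>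
      EReal.coe_toReal (htop j) (hr_ne_bot j _)
    have hcoeρw : ∀ j, ((ρw j : ℝ) : EReal) = r j (w j) := fun j =>
      EReal.coe_toReal (hwne j) (hr_ne_bot j _)
    have h2 : ∀ j, ρw j + ⟪pgrad f xd j (xd j), w j - x k j⟫
        + 1 / (2 * γ j) * ‖w j - x k j‖ ^ 2 ≤ ρ j := by
      intro j
      have h0 := hprox0 j
      rw [← hcoeρ j, ← hcoeρw j, ← EReal.coe_add, EReal.coe_le_coe_iff] at h0
      linarith
    set P : ℝ := ∑ j, ρ j with hPdef
    -- κ' identity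
    have hbX : ∀ j, sqNorm (X j - x k) = ‖w j - x k j‖ ^ 2 := by
      intro j
      simp only [sqNorm, Pi.sub_apply]
      rw [Finset.sum_eq_single j]
      · rw [hX j, Function.update_self]
      · intro j' _ hne
        rw [hX j, Function.update_of_ne hne, sub_self, norm_zero]
        exact zero_pow two_ne_zero
      · exact fun h => absurd (Finset.mem_univ j) h
    have hκ'j : ∀ j, κ' j = κk - σ * S + σ * ((t:ℝ)+1) * ‖w j - x k j‖ ^ 2 := by
      intro j
      have e1 : (k:ℤ) + 1 - ((t+1 : ℕ) : ℤ) + 1 + ((t : ℕ) : ℤ) = (k:ℤ) + 1 := by omega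
      have e2 : (k:ℤ) + 1 - ((t+1 : ℕ) : ℤ) + ((t : ℕ) : ℤ) = (k:ℤ) := by omega
      have n3 : (k:ℤ) ≠ (k:ℤ) + 1 := by omega
      have hmain : ∀ i ∈ Finset.range t,
          ((i:ℝ)+1) * sqNorm (y j ((k:ℤ) + 1 - ((t+1 : ℕ) : ℤ) + 1 + (i : ℤ))
            - y j ((k:ℤ) + 1 - ((t+1 : ℕ) : ℤ) + (i : ℤ)))
          = ((i:ℝ)+1) * T (i+1) := by
        intro i hi
        rw [Finset.mem_range] at hi
        have n1 : (k:ℤ) + 1 - ((t+1 : ℕ) : ℤ) + 1 + (i : ℤ) ≠ (k:ℤ) + 1 := by omega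
        have n2 : (k:ℤ) + 1 - ((t+1 : ℕ) : ℤ) + (i : ℤ) ≠ (k:ℤ) + 1 := by omega
        rw [hy j, if_neg n1, hy j, if_neg n2]
        have a1 : (k:ℤ) + 1 - ((t+1 : ℕ) : ℤ) + 1 + (i : ℤ)
            = (k:ℤ) - ((t+1 : ℕ) : ℤ) + 1 + ((i+1 : ℕ) : ℤ) := by omega
        have a2 : (k:ℤ) + 1 - ((t+1 : ℕ) : ℤ) + (i : ℤ)
            = (k:ℤ) - ((t+1 : ℕ) : ℤ) + ((i+1 : ℕ) : ℤ) := by omega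
        rw [a1, a2]
      rw [hκ' j, Finset.sum_range_succ, e1, e2, hy j, if_pos rfl, hy j, if_neg n3,
        Finset.sum_congr rfl hmain, hbX j, hκkT]
      have h3 := kappa_sum_identity T t
      rw [← hSdef] at h3
      linear_combination σ * h3
    -- bound ‖x^k - x^{k-d}‖² by τ S
    have hsub : ∀ j, ‖x (k:ℤ) j - xd j‖ ^ 2 ≤ ((t:ℝ)+1) *
        ∑ i ∈ Finset.range (t+1), ‖x ((k:ℤ) - i) j - x ((k:ℤ) - i - 1) j‖ ^ 2 := by
      intro j
      rw [hxd j]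
      have htel := telescope_sum (fun h => x h j) (k:ℤ) (d j)
      calc ‖x (k:ℤ) j - x ((k:ℤ) - (d j : ℤ)) j‖ ^ 2
          = ‖∑ i ∈ Finset.range (d j), (x ((k:ℤ) - i) j - x ((k:ℤ) - i - 1) j)‖ ^ 2 := by
            rw [← htel]
        _ ≤ (∑ i ∈ Finset.range (d j), ‖x ((k:ℤ) - i) j - x ((k:ℤ) - i - 1) j‖) ^ 2 := by
            apply pow_le_pow_left₀ (norm_nonneg _)
            exact norm_sum_le _ _
        _ ≤ ((Finset.range (d j)).card : ℝ) *
              ∑ i ∈ Finset.range (d j), ‖x ((k:ℤ) - i) j - x ((k:ℤ) - i - 1) j‖ ^ 2 :=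
            sq_sum_le_card_mul_sum_sq
        _ ≤ ((t:ℝ)+1) * ∑ i ∈ Finset.range (t+1), ‖x ((k:ℤ) - i) j - x ((k:ℤ) - i - 1) j‖ ^ 2 := by
            rw [Finset.card_range]
            apply mul_le_mul
            · exact_mod_cast hd j
            · apply Finset.sum_le_sum_of_subset_of_nonneg (Finset.range_subset_range.2 (hd j))
              intro i _ _
              positivity
            · positivity
            · positivity
    have hreflect : S = ∑ i ∈ Finset.range (t+1),
        sqNorm (x ((k:ℤ) - (i : ℤ)) - x ((k:ℤ) - (i : ℤ) - 1)) := by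
      rw [hSdef, ← Finset.sum_range_reflect]
      apply Finset.sum_congr rfl
      intro i hi
      rw [Finset.mem_range] at hi
      simp only [hTdef]
      have c1 : (k:ℤ) - ((t+1 : ℕ) : ℤ) + 1 + ((t + 1 - 1 - i : ℕ) : ℤ) = (k:ℤ) - (i : ℤ) := by
        omega
      have c2 : (k:ℤ) - ((t+1 : ℕ) : ℤ) + ((t + 1 - 1 - i : ℕ) : ℤ) = (k:ℤ) - (i : ℤ) - 1 := by
        omega
      rw [c1, c2]
    have ha2 : sqNorm (x k - xd) ≤ ((t:ℝ)+1) * S := by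
      rw [hreflect]
      calc sqNorm (x k - xd) = ∑ j, ‖x (k:ℤ) j - xd j‖ ^ 2 := by
            simp only [sqNorm, Pi.sub_apply]
        _ ≤ ∑ j, (((t:ℝ)+1) *
              ∑ i ∈ Finset.range (t+1), ‖x ((k:ℤ) - i) j - x ((k:ℤ) - i - 1) j‖ ^ 2) :=
            Finset.sum_le_sum fun j _ => hsub j
        _ = ((t:ℝ)+1) * ∑ i ∈ Finset.range (t+1),
              ∑ j, ‖x ((k:ℤ) - i) j - x ((k:ℤ) - i - 1) j‖ ^ 2 := by
            rw [← Finset.mul_sum, Finset.sum_comm]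
        _ = ((t:ℝ)+1) * ∑ i ∈ Finset.range (t+1),
              sqNorm (x ((k:ℤ) - (i : ℤ)) - x ((k:ℤ) - (i : ℤ) - 1)) := by
            simp only [sqNorm, Pi.sub_apply]
    -- Cauchy-Schwarz
    set B : ℝ := ∑ j, ‖w j - x k j‖ ^ 2 with hBdef
    have hBnn : 0 ≤ B := by rw [hBdef]; exact Finset.sum_nonneg fun j _ => sq_nonneg _
    have key : (∑ j, ⟪pgrad f (x k) j (x k j) - pgrad f xd j (xd j), w j - x k j⟫) ≤
        M * Real.sqrt (sqNorm (x k - xd)) * Real.sqrt B := by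
      have hcs : (∑ j, ⟪pgrad f (x k) j (x k j) - pgrad f xd j (xd j), w j - x k j⟫)
          ≤ ∑ j, ‖pgrad f (x k) j (x k j) - pgrad f xd j (xd j)‖ * ‖w j - x k j‖ :=
        Finset.sum_le_sum fun j _ => real_inner_le_norm _ _
      have hcs2 := Real.sum_mul_le_sqrt_mul_sqrt Finset.univ
        (fun j => ‖pgrad f (x k) j (x k j) - pgrad f xd j (xd j)‖) (fun j => ‖w j - x k j‖)
      rw [← hBdef] at hcs2
      have hMd' : Real.sqrt (∑ j, ‖pgrad f (x k) j (x k j) - pgrad f xd j (xd j)‖ ^ 2)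
          ≤ M * Real.sqrt (sqNorm (x k - xd)) := hMd
      calc (∑ j, ⟪pgrad f (x k) j (x k j) - pgrad f xd j (xd j), w j - x k j⟫)
          ≤ ∑ j, ‖pgrad f (x k) j (x k j) - pgrad f xd j (xd j)‖ * ‖w j - x k j‖ := hcs
        _ ≤ Real.sqrt (∑ j, ‖pgrad f (x k) j (x k j) - pgrad f xd j (xd j)‖ ^ 2) *
              Real.sqrt B := hcs2
        _ ≤ M * Real.sqrt (sqNorm (x k - xd)) * Real.sqrt B :=
            mul_le_mul_of_nonneg_right hMd' (Real.sqrt_nonneg _)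
    have young : M * Real.sqrt (sqNorm (x k - xd)) * Real.sqrt B
        ≤ (m:ℝ) * σ * S + σ * ((t:ℝ)+1) * B := by
      set a := Real.sqrt (sqNorm (x k - xd)) with hadef
      set bb := Real.sqrt B with hbbdef
      have hBbb : B = bb ^ 2 := by rw [hbbdef, Real.sq_sqrt hBnn]
      have hann : 0 ≤ a := Real.sqrt_nonneg _
      have hbbnn : 0 ≤ bb := Real.sqrt_nonneg _
      have ha2' : a ^ 2 ≤ ((t:ℝ)+1) * S := by
        rw [hadef, Real.sq_sqrt (sqNorm_nonneg _)]
        exact ha2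
      have ht1 : (0:ℝ) < (t:ℝ)+1 := by positivity
      have h2' : M * a * bb * (2 * Real.sqrt m) * ((t:ℝ)+1)
          ≤ ((m:ℝ) * M * S + M * ((t:ℝ)+1) * bb ^ 2) * ((t:ℝ)+1) := by
        nlinarith [mul_nonneg hM.le (sq_nonneg (Real.sqrt m * a - ((t:ℝ)+1) * bb)),
          mul_le_mul_of_nonneg_left ha2' (by positivity : (0:ℝ) ≤ (m:ℝ) * M),
          mul_nonneg hM.le (sq_nonneg a), hsm2, hSnn, hann, hbbnn, hM.le, hsm.le,
          mul_nonneg hann hbbnn]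
      have h2'' : M * a * bb * (2 * Real.sqrt m)
          ≤ (m:ℝ) * M * S + M * ((t:ℝ)+1) * bb ^ 2 :=
        le_of_mul_le_mul_right h2' ht1
      have hrhs : (m:ℝ) * σ * S + σ * ((t:ℝ)+1) * B
          = ((m:ℝ) * M * S + M * ((t:ℝ)+1) * bb ^ 2) / (2 * Real.sqrt m) := by
        rw [hσdef, hBbb]
        field_simp
      rw [hrhs, le_div_iff₀ (by positivity)]
      exact h2''
    have key2 : (∑ j, ⟪pgrad f (x k) j (x k j) - pgrad f xd j (xd j), w j - x k j⟫)
        ≤ (m:ℝ) * σ * S + σ * ((t:ℝ)+1) * B := key.trans young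
    -- per-block combination
    have hItotal : ∀ j,
        f (X j) + (ρw j + (P - ρ j)) + κ' j ≤
          (f (x k) + P + κk - σ * S) +
            ⟪pgrad f (x k) j (x k j) - pgrad f xd j (xd j), w j - x k j⟫ +
            (Lip j / 2 - 1 / (2 * γ j) + σ * ((t:ℝ)+1)) * ‖w j - x k j‖ ^ 2 := by
      intro j
      have e1 : ⟪pgrad f (x k) j (x k j), w j - x k j⟫ =
          ⟪pgrad f (x k) j (x k j) - pgrad f xd j (xd j), w j - x k j⟫ +
          ⟪pgrad f xd j (xd j), w j - x k j⟫ := by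
        rw [inner_sub_left]
        ring
      have hh1 := h1 j
      have hh2 := h2 j
      have hh3 := hκ'j j
      rw [e1] at hh1
      linarith [hh1, hh2, hh3]
    have hsum1 : (∑ j, (f (X j) + (ρw j + (P - ρ j)) + κ' j)) ≤
        (m:ℝ) * (f (x k) + P + κk - σ * S) +
          (∑ j, ⟪pgrad f (x k) j (x k j) - pgrad f xd j (xd j), w j - x k j⟫) +
          ∑ j, (Lip j / 2 - 1 / (2 * γ j) + σ * ((t:ℝ)+1)) * ‖w j - x k j‖ ^ 2 := by
      calc (∑ j, (f (X j) + (ρw j + (P - ρ j)) + κ' j))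
          ≤ ∑ j, ((f (x k) + P + κk - σ * S) +
              ⟪pgrad f (x k) j (x k j) - pgrad f xd j (xd j), w j - x k j⟫ +
              (Lip j / 2 - 1 / (2 * γ j) + σ * ((t:ℝ)+1)) * ‖w j - x k j‖ ^ 2) :=
            Finset.sum_le_sum fun j _ => hItotal j
        _ = _ := by
            rw [Finset.sum_add_distrib, Finset.sum_add_distrib, Finset.sum_const,
              Finset.card_univ, Fintype.card_fin, nsmul_eq_mul]
    have hcoefsum : (∑ j, (Lip j / 2 - 1 / (2 * γ j) + σ * ((t:ℝ)+1)) * ‖w j - x k j‖ ^ 2)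
        = (∑ j, (Lip j / 2 - 1 / (2 * γ j)) * ‖w j - x k j‖ ^ 2) + σ * ((t:ℝ)+1) * B := by
      rw [hBdef, Finset.mul_sum, ← Finset.sum_add_distrib]
      exact Finset.sum_congr rfl fun j _ => by ring
    have hmD : (m:ℝ) * D =
        -(∑ j, (Lip j / 2 - 1 / (2 * γ j)) * ‖w j - x k j‖ ^ 2) - 2 * σ * ((t:ℝ)+1) * B := by
      rw [hDdef, hσdef, hBdef, ← mul_assoc,
        show (m:ℝ) * (1 / (2 * (m:ℝ))) = 1/2 by field_simp,
        Finset.mul_sum, Finset.mul_sum, ← Finset.sum_neg_distrib, ← Finset.sum_sub_distrib]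
      refine Finset.sum_congr rfl fun j _ => ?_
      have hγ0 : γ j ≠ 0 := (hγ j).ne'
      push_cast
      field_simp
      ring
    rw [hcoefsum] at hsum1
    have hQ : (∑ j, (f (X j) + (ρw j + (P - ρ j)) + κ' j)) ≤
        (m:ℝ) * (f (x k) + P + κk - D) := by nlinarith [hsum1, key2, hmD]
    have hfinal : 1 / (m:ℝ) * (∑ j, (f (X j) + (ρw j + (P - ρ j)) + κ' j))
        ≤ f (x k) + P + κk - D := by
      have h := mul_le_mul_of_nonneg_left hQ (by positivity : (0:ℝ) ≤ 1 / (m:ℝ))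
      rwa [← mul_assoc, one_div_mul_cancel hmpos.ne', one_mul] at h
    -- EReal conversions
    have hXr : ∀ j j', r j' (X j j') = (((if j' = j then ρw j else ρ j') : ℝ) : EReal) := by
      intro j j'
      rcases eq_or_ne j' j with rfl | hne
      · rw [if_pos rfl, hX j', Function.update_self]
        exact (hcoeρw j').symm
      · rw [if_neg hne, hX j, Function.update_of_ne hne]
        exact (hcoeρ j').symm
    have hterm : ∀ j, ((f (X j) : EReal) + ∑ j', r j' (X j j') + (κ' j : EReal))
        = (((f (X j) + (ρw j + (P - ρ j)) + κ' j : ℝ)) : EReal) := by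
      intro j
      have hsumr : (∑ j', r j' (X j j')) = ((ρw j + (P - ρ j) : ℝ) : EReal) := by
        rw [Finset.sum_congr rfl fun j' _ => hXr j j', ← ereal_coe_sum]
        congr 1
        have hsplit : ∀ j' ∈ Finset.univ, (if j' = j then ρw j else ρ j')
            = ρ j' + (if j' = j then ρw j - ρ j else 0) := by
          intro j' _
          by_cases h : j' = j
          · subst h
            rw [if_pos rfl, if_pos rfl]
            ring
          · rw [if_neg h, if_neg h, add_zero]
        rw [Finset.sum_congr rfl hsplit, Finset.sum_add_distrib,
          Finset.sum_ite_eq' Finset.univ j (fun _ => ρw j - ρ j), if_pos (Finset.mem_univ j),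
          hPdef]
        ring
      rw [hsumr, ← EReal.coe_add, ← EReal.coe_add]
    have hPsum : (∑ j', r j' (x k j')) = ((P : ℝ) : EReal) := by
      rw [hPdef, ereal_coe_sum]
      exact Finset.sum_congr rfl fun j' _ => (hcoeρ j').symm
    rw [Finset.sum_congr rfl fun j _ => hterm j, ← ereal_coe_sum, ← EReal.coe_mul, hPsum,
      ← EReal.coe_add, ← EReal.coe_add, ← EReal.coe_sub]
    exact EReal.coe_le_coe_iff.mpr hfinal
  · -- degenerate case : some r j (x k j) = ⊤
    obtain ⟨j₀, hj₀'⟩ := not_forall.1 htop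
    have hj₀ : r j₀ (x k j₀) = ⊤ := not_not.1 hj₀'
    have hsumtop : (∑ j', r j' (x k j')) = (⊤ : EReal) := by
      rw [← Finset.add_sum_erase _ _ (Finset.mem_univ j₀), hj₀]
      exact EReal.top_add_of_ne_bot (ereal_sum_ne_bot _ _ fun i _ => hr_ne_bot i _)
    rw [hsumtop, EReal.add_top_of_ne_bot (EReal.coe_ne_bot _), EReal.top_add_coe,
      EReal.top_sub_coe]
    exact le_top
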